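/- Fix k ≥ 1 and n ≥ 1, and for each multi-index (i_1,…,i_k) ∈ (Fin n)^k let θ_{i_1…i_k} : E → ℝ be a smooth function, the family being antisymmetric under permutations of the indices. Assume that for all indices i_1,…,i_{k+1} ∈ Fin n one has Σ_{a=1}^{k+1} (−1)^{a−1} ∂θ_{i_1…î_a…i_{k+1}}/∂y^{i_a} = 0 identically on E (the hat means the index is omitted). Then there exists a smooth antisymmetric family of functions ω_{j_1…j_{k−1}} : E → ℝ (a single function if k = 1) such that θ_{i_1…i_k} = Σ_{a=1}^{k} (−1)^{a−1} ∂ω_{i_1…î_a…i_k}/∂y^{i_a} on all of E. (This is the coordinate content of the Poincaré-type Lemma: a semi-basic k-form on J¹π that is d_J-closed modulo dt is locally d_J-exact modulo dt; on the model E the fibres in y are convex, so the primitive exists globally.) -/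

import Mathlib

open MeasureTheory
set_option maxHeartbeats 1000000
set_option synthInstance.maxHeartbeats 400000


noncomputable section

/-- The local model `E = ℝ × (Fin n → ℝ) × (Fin n → ℝ)` of the first jet bundle `J¹π`,
with coordinates `(t, xⁱ, yⁱ)`. -/
abbrev E (n : ℕ) : Type := ℝ × (Fin n → ℝ) × (Fin n → ℝ)

/-- The coordinate vector `∂/∂yⁱ`. -/
def pdy {n : ℕ} (i : Fin n) : E n := (0, 0, Pi.single i 1)

section Param
variable {H B : Type*} [NormedAddCommGroup H] [NormedSpace ℝ H] [FiniteDimensional ℝ H]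
  [NormedAddCommGroup B] [NormedSpace ℝ B] [CompleteSpace B]

omit [CompleteSpace B] in
theorem paramDeriv (F : ℝ × H → B) (hF : ContDiff ℝ (⊤ : ℕ∞) F) (x₀ : H) :
    HasFDerivAt (fun x => ∫ s in (0:ℝ)..1, F (s, x))
      (∫ s in (0:ℝ)..1, (fderiv ℝ F (s, x₀)).comp (ContinuousLinearMap.inr ℝ ℝ H)) x₀ := by
  have h1 : (1 : ℕ∞) ≤ ⊤ := le_top
  have hFd : Differentiable ℝ F := hF.differentiable (by simp)
  have hdf : Continuous fun q : ℝ × H => fderiv ℝ F q := hF.continuous_fderiv (by simp)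
  obtain ⟨C, hC⟩ := (((isCompact_Icc (a := (0:ℝ)) (b := 1)).prod
    (isCompact_closedBall x₀ 1))).exists_bound_of_continuousOn hdf.norm.continuousOn
  apply intervalIntegral.hasFDerivAt_integral_of_dominated_of_fderiv_le (𝕜 := ℝ)
    (μ := volume) (F := fun x t => F (t, x))
    (F' := fun x t => (fderiv ℝ F (t, x)).comp (ContinuousLinearMap.inr ℝ ℝ H))
    (bound := fun _ => C) (s := Metric.ball x₀ 1) (Metric.ball_mem_nhds x₀ one_pos)
  · filter_upwards with x
    exact (hF.continuous.comp (by fun_prop)).aestronglyMeasurable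
  · exact (hF.continuous.comp (by fun_prop)).intervalIntegrable 0 1
  · apply Continuous.aestronglyMeasurable
    exact ((ContinuousLinearMap.compL ℝ H (ℝ × H) B).flip
      (ContinuousLinearMap.inr ℝ ℝ H)).continuous.comp (hdf.comp (by fun_prop))
  · filter_upwards with t ht x hx
    have hC0 : 0 ≤ C := (norm_nonneg _).trans (hC (0, x₀)
      ⟨⟨le_refl 0, zero_le_one⟩, Metric.mem_closedBall_self zero_le_one⟩)
    refine ContinuousLinearMap.opNorm_le_bound _ hC0 fun v => ?_
    have : ‖fderiv ℝ F (t, x)‖ ≤ C := by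
      have ht' : t ∈ Set.Icc (0:ℝ) 1 := by
        rw [Set.uIoc_of_le zero_le_one] at ht; exact ⟨ht.1.le, ht.2⟩
      simpa using hC (t, x) ⟨ht', Metric.ball_subset_closedBall hx⟩
    calc ‖(fderiv ℝ F (t, x)).comp (ContinuousLinearMap.inr ℝ ℝ H) v‖
        = ‖fderiv ℝ F (t, x) (0, v)‖ := rfl
      _ ≤ ‖fderiv ℝ F (t, x)‖ * ‖((0 : ℝ), v)‖ := ContinuousLinearMap.le_opNorm _ _
      _ ≤ C * ‖v‖ := by
          rw [Prod.norm_def]; simp only [norm_zero]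
          rw [max_eq_right (norm_nonneg v)]
          exact mul_le_mul_of_nonneg_right this (norm_nonneg v)
  · exact intervalIntegrable_const
  · filter_upwards with t ht x hx
    exact (hFd (t, x)).hasFDerivAt.comp x (hasFDerivAt_prodMk_right t x)
end Param

section P2
universe u
variable {H : Type u} [NormedAddCommGroup H] [NormedSpace ℝ H] [FiniteDimensional ℝ H]

theorem paramContDiff (k : ℕ) :
    ∀ {B : Type u} [NormedAddCommGroup B] [NormedSpace ℝ B] [CompleteSpace B]
      (F : ℝ × H → B), ContDiff ℝ (⊤ : ℕ∞) F →
      ContDiff ℝ (k : ℕ∞) fun x => ∫ s in (0:ℝ)..1, F (s, x) := by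
  induction k with
  | zero =>
    intro B _ _ _ F hF
    have : ContDiff ℝ (0 : WithTop ℕ∞) fun x : H => ∫ s in (0:ℝ)..1, F (s, x) :=
      contDiff_zero.2 (intervalIntegral.continuous_parametric_intervalIntegral_of_continuous'
        (f := fun x t => F (t, x)) (hF.continuous.comp (by fun_prop)) 0 1)
    exact_mod_cast this
  | succ k ih =>
    intro B _ _ _ F hF
    have hF1 : ContDiff ℝ (⊤ : ℕ∞) fun q : ℝ × H =>
        (fderiv ℝ F q).comp (ContinuousLinearMap.inr ℝ ℝ H) := by
      refine (((ContinuousLinearMap.compL ℝ H (ℝ × H) B).flip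
        (ContinuousLinearMap.inr ℝ ℝ H)).contDiff).comp (hF.fderiv_right ?_)
      exact_mod_cast le_top
    have hd : Differentiable ℝ fun x : H => ∫ s in (0:ℝ)..1, F (s, x) :=
      fun x => (paramDeriv F hF x).differentiableAt
    have hfd : (fderiv ℝ fun x : H => ∫ s in (0:ℝ)..1, F (s, x)) =
        fun x => ∫ s in (0:ℝ)..1, (fun q : ℝ × H =>
          (fderiv ℝ F q).comp (ContinuousLinearMap.inr ℝ ℝ H)) (s, x) :=
      funext fun x => (paramDeriv F hF x).fderiv
    have : ContDiff ℝ ((k : WithTop ℕ∞) + 1) fun x : H => ∫ s in (0:ℝ)..1, F (s, x) := by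
      rw [contDiff_succ_iff_fderiv]
      refine ⟨hd, by simp, ?_⟩
      rw [hfd]
      have h2 := ih (B := H →L[ℝ] B) (fun q : ℝ × H =>
        (fderiv ℝ F q).comp (ContinuousLinearMap.inr ℝ ℝ H)) hF1
      exact_mod_cast h2
    exact_mod_cast this
end P2

section P3
universe u
variable {H : Type u} [NormedAddCommGroup H] [NormedSpace ℝ H] [FiniteDimensional ℝ H]
  {B : Type u} [NormedAddCommGroup B] [NormedSpace ℝ B] [CompleteSpace B]

open scoped ContDiff in
theorem paramSmooth (F : ℝ × H → B) (hF : ContDiff ℝ (⊤ : ℕ∞) F) :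
    ContDiff ℝ (⊤ : ℕ∞) fun x => ∫ s in (0:ℝ)..1, F (s, x) := by
  have : ContDiff ℝ (((⊤ : ℕ∞)) : WithTop ℕ∞) fun x => ∫ s in (0:ℝ)..1, F (s, x) := by
    rw [show (((⊤ : ℕ∞)) : WithTop ℕ∞) = ∞ from rfl, contDiff_infty]
    intro k
    exact_mod_cast paramContDiff k F hF
  exact_mod_cast this

theorem paramFDerivApply (F : ℝ × H → B) (hF : ContDiff ℝ (⊤ : ℕ∞) F) (x : H) (v : H) :
    fderiv ℝ (fun x => ∫ s in (0:ℝ)..1, F (s, x)) x v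
      = ∫ s in (0:ℝ)..1, fderiv ℝ F (s, x) (0, v) := by
  rw [(paramDeriv F hF x).fderiv]
  have h1 : (1 : ℕ∞) ≤ ⊤ := le_top
  have hint : IntervalIntegrable
      (fun s : ℝ => (fderiv ℝ F (s, x)).comp (ContinuousLinearMap.inr ℝ ℝ H)) volume 0 1 := by
    apply Continuous.intervalIntegrable
    exact ((ContinuousLinearMap.compL ℝ H (ℝ × H) B).flip
      (ContinuousLinearMap.inr ℝ ℝ H)).continuous.comp
      ((hF.continuous_fderiv (by simp)).comp (by fun_prop))
  rw [ContinuousLinearMap.intervalIntegral_apply hint v]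
  rfl

theorem paramFDerivApply' (F : ℝ × H → B) (hF : ContDiff ℝ (⊤ : ℕ∞) F) (x : H) (v : H) :
    fderiv ℝ (fun x => ∫ s in (0:ℝ)..1, F (s, x)) x v
      = ∫ s in (0:ℝ)..1, fderiv ℝ (fun y => F (s, y)) x v := by
  rw [paramFDerivApply F hF x v]
  apply intervalIntegral.integral_congr; intro s _
  show fderiv ℝ F (s, x) (0, v) = fderiv ℝ (fun y => F (s, y)) x v
  have h1 : (1 : ℕ∞) ≤ ⊤ := le_top
  have h := ((hF.differentiable (by simp) (s, x)).hasFDerivAt.comp x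
    (hasFDerivAt_prodMk_right s x)).fderiv
  rw [show (fun y => F (s, y)) = F ∘ Prod.mk s from rfl, h]; rfl
end P3

-- scaling map
def As (n : ℕ) (s : ℝ) : E n →L[ℝ] E n :=
  (ContinuousLinearMap.id ℝ ℝ).prodMap
    ((ContinuousLinearMap.id ℝ (Fin n → ℝ)).prodMap (s • ContinuousLinearMap.id ℝ (Fin n → ℝ)))

variable {n : ℕ}

lemma As_apply (s : ℝ) (p : E n) : As n s p = (p.1, p.2.1, s • p.2.2) := rfl

lemma As_pdy (s : ℝ) (j : Fin n) : As n s (pdy j) = s • pdy j := by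
  simp [As_apply, pdy, Prod.smul_mk, smul_zero]

lemma As_one (p : E n) : As n 1 p = p := by
  simp [As_apply, one_smul]

lemma contDiff_As : ContDiff ℝ (⊤ : ℕ∞) (fun q : ℝ × E n => As n q.1 q.2) := by
  have : (fun q : ℝ × E n => As n q.1 q.2)
      = fun q : ℝ × E n => (q.2.1, q.2.2.1, q.1 • q.2.2.2) := rfl
  rw [this]
  fun_prop

def Fm (n m : ℕ) (f : E n → ℝ) : ℝ × E n → ℝ := fun q => q.1 ^ m * f (As n q.1 q.2)

lemma Fm_smooth (m : ℕ) (f : E n → ℝ) (hf : ContDiff ℝ (⊤ : ℕ∞) f) :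
    ContDiff ℝ (⊤ : ℕ∞) (Fm n m f) := by
  apply ContDiff.mul
  · fun_prop
  · exact hf.comp contDiff_As

def Phi (n m : ℕ) (f : E n → ℝ) : E n → ℝ := fun p => ∫ s in (0:ℝ)..1, Fm n m f (s, p)

lemma Phi_smooth (m : ℕ) (f : E n → ℝ) (hf : ContDiff ℝ (⊤ : ℕ∞) f) :
    ContDiff ℝ (⊤ : ℕ∞) (Phi n m f) :=
  paramSmooth (Fm n m f) (Fm_smooth m f hf)

lemma Phi_fderiv (m : ℕ) (f : E n → ℝ) (hf : ContDiff ℝ (⊤ : ℕ∞) f) (p : E n) (j : Fin n) :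
    fderiv ℝ (Phi n m f) p (pdy j)
      = ∫ s in (0:ℝ)..1, s ^ (m + 1) * fderiv ℝ f (As n s p) (pdy j) := by
  have h1 : (1 : ℕ∞) ≤ ⊤ := le_top
  rw [show Phi n m f = fun p => ∫ s in (0:ℝ)..1, Fm n m f (s, p) from rfl]
  rw [paramFDerivApply' (Fm n m f) (Fm_smooth m f hf) p (pdy j)]
  apply intervalIntegral.integral_congr; intro s _
  show (fderiv ℝ (fun y => Fm n m f (s, y)) p) (pdy j)
      = s ^ (m + 1) * (fderiv ℝ f (As n s p)) (pdy j)
  have h2 : HasFDerivAt (fun y : E n => f (As n s y))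
      ((fderiv ℝ f (As n s p)).comp (As n s)) p :=
    ((hf.differentiable (by simp)) (As n s p)).hasFDerivAt.comp p (As n s).hasFDerivAt
  have h3 : HasFDerivAt (fun y : E n => Fm n m f (s, y))
      (s ^ m • ((fderiv ℝ f (As n s p)).comp (As n s))) p := h2.const_mul (s ^ m)
  rw [h3.fderiv]
  have : (s ^ m • ((fderiv ℝ f (As n s p)).comp (As n s))) (pdy j)
      = s ^ m * fderiv ℝ f (As n s p) (As n s (pdy j)) := rfl
  rw [this, As_pdy, _root_.map_smul]
  simp only [smul_eq_mul]; ring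

lemma ftc (m : ℕ) (f : E n → ℝ) (hf : ContDiff ℝ (⊤ : ℕ∞) f) (p : E n) :
    f p = ∫ s in (0:ℝ)..1,
      (((m : ℝ) + 1) * s ^ m * f (As n s p)
        + s ^ (m + 1) * fderiv ℝ f (As n s p) ((0 : ℝ), (0 : Fin n → ℝ), p.2.2)) := by
  have h1 : (1 : ℕ∞) ≤ ⊤ := le_top
  have hfd := hf.differentiable (by simp)
  have hder : ∀ s ∈ Set.uIcc (0:ℝ) 1, HasDerivAt (fun s : ℝ => s ^ (m + 1) * f (As n s p))
      (((m : ℝ) + 1) * s ^ m * f (As n s p)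
        + s ^ (m + 1) * fderiv ℝ f (As n s p) ((0 : ℝ), (0 : Fin n → ℝ), p.2.2)) s := by
    intro s _
    have hA : HasDerivAt (fun s : ℝ => As n s p) ((0:ℝ), (0 : Fin n → ℝ), p.2.2) s := by
      refine (hasDerivAt_const s p.1).prodMk ((hasDerivAt_const s p.2.1).prodMk ?_)
      simpa using (hasDerivAt_id s).smul_const p.2.2
    have hfA : HasDerivAt (fun s : ℝ => f (As n s p))
        (fderiv ℝ f (As n s p) ((0:ℝ), (0 : Fin n → ℝ), p.2.2)) s :=
      (hfd (As n s p)).hasFDerivAt.comp_hasDerivAt s hA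
    have := (hasDerivAt_pow (m + 1) s).mul hfA
    refine this.congr_deriv ?_
    push_cast [Nat.add_sub_cancel]
    ring
  have hcont : Continuous fun s : ℝ =>
      ((m : ℝ) + 1) * s ^ m * f (As n s p)
        + s ^ (m + 1) * fderiv ℝ f (As n s p) ((0 : ℝ), (0 : Fin n → ℝ), p.2.2) := by
    have hAc : Continuous fun s : ℝ => As n s p := by
      rw [show (fun s : ℝ => As n s p) = fun s : ℝ => (p.1, p.2.1, s • p.2.2) from rfl]
      fun_prop
    apply Continuous.add
    · exact (continuous_const.mul (continuous_pow m)).mul (hf.continuous.comp hAc)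
    · exact (continuous_pow (m+1)).mul
        (((hf.continuous_fderiv (by simp)).comp hAc).clm_apply continuous_const)
  have key := intervalIntegral.integral_eq_sub_of_hasDerivAt hder
    (hcont.intervalIntegrable 0 1)
  rw [key, As_one]
  norm_num

-- continuity helpers
lemma cont_As_line (p : E n) : Continuous fun s : ℝ => As n s p := by
  rw [show (fun s : ℝ => As n s p) = fun s : ℝ => (p.1, p.2.1, s • p.2.2) from rfl]
  fun_prop

lemma cont_deriv_line (f : E n → ℝ) (hf : ContDiff ℝ (⊤ : ℕ∞) f) (p : E n) (v : E n) :
    Continuous fun s : ℝ => fderiv ℝ f (As n s p) v :=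
  ((hf.continuous_fderiv (by simp)).comp (cont_As_line p)).clm_apply
    continuous_const

-- index combinatorics
lemma consA {α : Type*} {m : ℕ} (i : α) (I : Fin (m + 1) → α) :
    (fun b : Fin (m + 1) => (Fin.cons i I : Fin (m + 2) → α) ((0 : Fin (m + 2)).succAbove b))
      = I := by
  funext b
  simp [Fin.zero_succAbove]

lemma consB {α : Type*} {m : ℕ} (i : α) (I : Fin (m + 1) → α) (a : Fin (m + 1)) :
    (fun b : Fin (m + 1) => (Fin.cons i I : Fin (m + 2) → α) ((a.succ).succAbove b))
      = Fin.cons i (fun b : Fin m => I (a.succAbove b)) := by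
  funext b
  induction b using Fin.cases with
  | zero => simp [Fin.succ_succAbove_zero]
  | succ c => simp [Fin.succ_succAbove_succ]

lemma pdy_sum (y : Fin n → ℝ) :
    (∑ i : Fin n, y i • pdy i) = ((0 : ℝ), (0 : Fin n → ℝ), y) := by
  have h3 : (∑ i : Fin n, y i • (Pi.single i (1:ℝ) : Fin n → ℝ)) = y := by
    funext x
    simp [Finset.sum_apply, Pi.single_apply]
  have h1 : (∑ i : Fin n, y i • pdy i)
      = ∑ i : Fin n, ((0:ℝ), (0 : Fin n → ℝ), y i • (Pi.single i (1:ℝ) : Fin n → ℝ)) :=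
    Finset.sum_congr rfl fun i _ => by simp [pdy, Prod.smul_mk, smul_zero]
  refine Prod.ext ?_ (Prod.ext ?_ ?_)
  · rw [h1, Prod.fst_sum]; simp
  · rw [h1, Prod.snd_sum, Prod.fst_sum]; simp
  · rw [h1, Prod.snd_sum, Prod.snd_sum]; exact h3

/-- **Poincaré-type lemma, coordinate form.**  Let `k = m+1 ≥ 1`,
`n ≥ 1` and let `θ_{i₁…i_k} : E → ℝ` be a smooth family, antisymmetric in its
indices, such that `Σ_{a} (−1)^{a−1} ∂θ_{i₁…î_a…i_{k+1}}/∂y^{i_a} = 0` on `E`.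
Then there is a smooth antisymmetric family `ω_{j₁…j_{k−1}}` with
`θ_{i₁…i_k} = Σ_a (−1)^{a−1} ∂ω_{i₁…î_a…i_k}/∂y^{i_a}` on all of `E`. -/
theorem stmt1 (n m : ℕ) (hn : 1 ≤ n)
    (θ : (Fin (m + 1) → Fin n) → E n → ℝ)
    (hθsmooth : ∀ I, ContDiff ℝ (⊤ : ℕ∞) (θ I))
    (hθanti : ∀ (σ : Equiv.Perm (Fin (m + 1))) (I : Fin (m + 1) → Fin n) (p : E n),
      θ (I ∘ σ) p = ((Equiv.Perm.sign σ : ℤ) : ℝ) * θ I p)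
    (hclosed : ∀ (I : Fin (m + 2) → Fin n) (p : E n),
      ∑ a : Fin (m + 2),
        (-1 : ℝ) ^ (a : ℕ) * fderiv ℝ (θ fun b => I (a.succAbove b)) p (pdy (I a)) = 0) :
    ∃ ω : (Fin m → Fin n) → E n → ℝ,
      (∀ I, ContDiff ℝ (⊤ : ℕ∞) (ω I)) ∧
      (∀ (σ : Equiv.Perm (Fin m)) (I : Fin m → Fin n) (p : E n),
        ω (I ∘ σ) p = ((Equiv.Perm.sign σ : ℤ) : ℝ) * ω I p) ∧
      (∀ (I : Fin (m + 1) → Fin n) (p : E n),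
        θ I p = ∑ a : Fin (m + 1),
          (-1 : ℝ) ^ (a : ℕ) * fderiv ℝ (ω fun b => I (a.succAbove b)) p (pdy (I a))) := by
  have h1 : (1 : ℕ∞) ≤ (⊤ : ℕ∞) := le_top
  refine ⟨fun J p => ∑ i : Fin n, p.2.2 i * Phi n m (θ (Fin.cons i J)) p, ?_, ?_, ?_⟩
  · -- smoothness
    intro J
    apply ContDiff.sum
    intro i _
    exact (by fun_prop : ContDiff ℝ (⊤ : ℕ∞) fun p : E n => p.2.2 i).mul
      (Phi_smooth m _ (hθsmooth _))
  · -- antisymmetry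
    intro σ J p
    set σ' : Equiv.Perm (Fin (m + 1)) := Equiv.Perm.decomposeFin.symm (0, σ) with hσ'
    have hsign : ((Equiv.Perm.sign σ' : ℤ) : ℝ) = ((Equiv.Perm.sign σ : ℤ) : ℝ) := by
      simp [hσ', Equiv.Perm.decomposeFin.symm_sign]
    have hcons : ∀ i : Fin n,
        Fin.cons i (J ∘ σ) = (Fin.cons i J : Fin (m + 1) → Fin n) ∘ σ' := by
      intro i; funext b
      induction b using Fin.cases with
      | zero => simp [hσ']
      | succ c => simp [hσ', Equiv.Perm.decomposeFin_symm_apply_succ]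
    show ∑ i : Fin n, p.2.2 i * Phi n m (θ (Fin.cons i (J ∘ σ))) p
        = ((Equiv.Perm.sign σ : ℤ) : ℝ) * ∑ i : Fin n, p.2.2 i * Phi n m (θ (Fin.cons i J)) p
    rw [Finset.mul_sum]
    apply Finset.sum_congr rfl
    intro i _
    rw [hcons i]
    have hPhi : Phi n m (θ ((Fin.cons i J : Fin (m + 1) → Fin n) ∘ σ')) p
        = ((Equiv.Perm.sign σ' : ℤ) : ℝ) * Phi n m (θ (Fin.cons i J)) p := by
      show (∫ s in (0:ℝ)..1, Fm n m (θ ((Fin.cons i J : Fin (m + 1) → Fin n) ∘ σ')) (s, p)) = _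
      show _ = ((Equiv.Perm.sign σ' : ℤ) : ℝ) * ∫ s in (0:ℝ)..1, Fm n m (θ (Fin.cons i J)) (s, p)
      rw [← intervalIntegral.integral_const_mul]
      apply intervalIntegral.integral_congr; intro s _
      show Fm n m (θ ((Fin.cons i J : Fin (m + 1) → Fin n) ∘ σ')) (s, p) = _
      unfold Fm
      rw [hθanti σ' (Fin.cons i J) (As n s p)]
      ring
    rw [hPhi, hsign]
    ring
  · -- main identity
    intro I p
    -- derivative of ω
    have hfdW : ∀ (J : Fin m → Fin n) (j : Fin n),
        fderiv ℝ (fun q : E n => ∑ i : Fin n, q.2.2 i * Phi n m (θ (Fin.cons i J)) q) p (pdy j)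
          = Phi n m (θ (Fin.cons j J)) p
            + ∑ i : Fin n, p.2.2 i *
                ∫ s in (0:ℝ)..1, s ^ (m + 1) *
                  fderiv ℝ (θ (Fin.cons i J)) (As n s p) (pdy j) := by
      intro J j
      set c : Fin n → (E n →L[ℝ] ℝ) := fun i =>
        (ContinuousLinearMap.proj i).comp
          ((ContinuousLinearMap.snd ℝ (Fin n → ℝ) (Fin n → ℝ)).comp
            (ContinuousLinearMap.snd ℝ ℝ ((Fin n → ℝ) × (Fin n → ℝ)))) with hc
      have hterm : ∀ i : Fin n,
          HasFDerivAt (fun q : E n => q.2.2 i * Phi n m (θ (Fin.cons i J)) q)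
            ((c i p) • fderiv ℝ (Phi n m (θ (Fin.cons i J))) p
              + (Phi n m (θ (Fin.cons i J)) p) • (c i)) p := by
        intro i
        have h2 : HasFDerivAt (Phi n m (θ (Fin.cons i J)))
            (fderiv ℝ (Phi n m (θ (Fin.cons i J))) p) p :=
          (((Phi_smooth m _ (hθsmooth _)).differentiable (by simp)) p).hasFDerivAt
        exact ((c i).hasFDerivAt).mul h2
      have hW : HasFDerivAt (fun q : E n => ∑ i : Fin n, q.2.2 i * Phi n m (θ (Fin.cons i J)) q)
          (∑ i : Fin n, ((c i p) • fderiv ℝ (Phi n m (θ (Fin.cons i J))) p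
            + (Phi n m (θ (Fin.cons i J)) p) • (c i))) p :=
        HasFDerivAt.fun_sum (fun i _ => hterm i)
      rw [hW.fderiv, ContinuousLinearMap.sum_apply]
      have hterm2 : ∀ i : Fin n,
          ((c i p) • fderiv ℝ (Phi n m (θ (Fin.cons i J))) p
            + (Phi n m (θ (Fin.cons i J)) p) • (c i)) (pdy j)
          = p.2.2 i * (∫ s in (0:ℝ)..1, s ^ (m + 1) *
              fderiv ℝ (θ (Fin.cons i J)) (As n s p) (pdy j))
            + Phi n m (θ (Fin.cons i J)) p * (if i = j then (1:ℝ) else 0) := by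
        intro i
        rw [ContinuousLinearMap.add_apply, ContinuousLinearMap.smul_apply,
          ContinuousLinearMap.smul_apply]
        rw [Phi_fderiv m _ (hθsmooth _) p j]
        have : (c i) (pdy j) = (if i = j then (1:ℝ) else 0) := by
          show (Pi.single j (1:ℝ) : Fin n → ℝ) i = _
          rw [Pi.single_apply]
        rw [this]
        rfl
      rw [Finset.sum_congr rfl (fun i _ => hterm2 i), Finset.sum_add_distrib]
      rw [add_comm]
      congr 1
      simp [Finset.sum_ite_eq, mul_ite]
    -- rotation antisymmetry
    have hrot : ∀ (a : Fin (m + 1)) (q : E n),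
        θ (Fin.cons (I a) (fun b => I (a.succAbove b))) q = (-1:ℝ) ^ (a:ℕ) * θ I q := by
      intro a q
      have hIσ : I ∘ ⇑(a.cycleRange)⁻¹
          = Fin.cons (I a) (fun b => I (a.succAbove b)) := by
        funext b
        induction b using Fin.cases with
        | zero => simp [Equiv.Perm.inv_def, Fin.cycleRange_symm_zero]
        | succ c => simp [Equiv.Perm.inv_def, Fin.cycleRange_symm_succ]
      have h := hθanti (a.cycleRange)⁻¹ I q
      rw [hIσ] at h
      rw [h]
      congr 1
      rw [Equiv.Perm.sign_inv, Fin.sign_cycleRange]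
      push_cast
      simp
    have hPhiRot : ∀ a : Fin (m + 1),
        Phi n m (θ (Fin.cons (I a) (fun b => I (a.succAbove b)))) p
          = (-1:ℝ) ^ (a:ℕ) * Phi n m (θ I) p := by
      intro a
      show (∫ s in (0:ℝ)..1, Fm n m (θ (Fin.cons (I a) fun b => I (a.succAbove b))) (s, p)) = _
      show _ = (-1:ℝ) ^ (a:ℕ) * ∫ s in (0:ℝ)..1, Fm n m (θ I) (s, p)
      rw [← intervalIntegral.integral_const_mul]
      apply intervalIntegral.integral_congr; intro s _
      show Fm n m (θ (Fin.cons (I a) fun b => I (a.succAbove b))) (s, p) = _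
      unfold Fm
      rw [hrot a (As n s p)]
      ring
    -- closedness consequence
    have hclosed' : ∀ (i : Fin n) (q : E n),
        fderiv ℝ (θ I) q (pdy i)
          = ∑ a : Fin (m + 1), (-1:ℝ) ^ (a:ℕ) *
              fderiv ℝ (θ (Fin.cons i (fun b => I (a.succAbove b)))) q (pdy (I a)) := by
      intro i q
      have h0 := hclosed (Fin.cons i I) q
      rw [Fin.sum_univ_succ] at h0
      rw [consA i I] at h0
      have hB : ∀ a : Fin (m + 1),
          (fun b => (Fin.cons i I : Fin (m + 2) → Fin n) ((a.succ).succAbove b))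
            = Fin.cons i (fun b => I (a.succAbove b)) := consB i I
      simp only [Fin.cons_zero, Fin.cons_succ, Fin.val_zero, pow_zero, one_mul,
        Fin.val_succ] at h0
      simp only [hB] at h0
      have hs : (∑ a : Fin (m + 1), (-1:ℝ) ^ ((a:ℕ) + 1) *
            fderiv ℝ (θ (Fin.cons i (fun b => I (a.succAbove b)))) q (pdy (I a)))
          + (∑ a : Fin (m + 1), (-1:ℝ) ^ (a:ℕ) *
            fderiv ℝ (θ (Fin.cons i (fun b => I (a.succAbove b)))) q (pdy (I a))) = 0 := by
        rw [← Finset.sum_add_distrib]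
        apply Finset.sum_eq_zero
        intro a _
        ring
      linarith [h0, hs]
    -- integrability helpers
    have hInt1 : ∀ (K : Fin (m + 1) → Fin n) (v : E n),
        IntervalIntegrable (fun s : ℝ => s ^ (m + 1) * fderiv ℝ (θ K) (As n s p) v)
          volume 0 1 := by
      intro K v
      exact ((continuous_pow (m+1)).mul (cont_deriv_line _ (hθsmooth K) p v)).intervalIntegrable 0 1
    -- final computation
    have e1 : ∀ a : Fin (m + 1),
        (-1:ℝ) ^ (a:ℕ) * fderiv ℝ (fun q : E n => ∑ i : Fin n, q.2.2 i *
            Phi n m (θ (Fin.cons i (fun b => I (a.succAbove b)))) q) p (pdy (I a))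
          = (-1:ℝ) ^ (a:ℕ) * Phi n m (θ (Fin.cons (I a) (fun b => I (a.succAbove b)))) p
            + (-1:ℝ) ^ (a:ℕ) * ∑ i : Fin n, p.2.2 i *
                ∫ s in (0:ℝ)..1, s ^ (m + 1) *
                  fderiv ℝ (θ (Fin.cons i (fun b => I (a.succAbove b)))) (As n s p)
                    (pdy (I a)) := by
      intro a
      rw [hfdW _ (I a)]
      ring
    show θ I p = ∑ a : Fin (m + 1), (-1:ℝ) ^ (a:ℕ) *
      fderiv ℝ (fun q : E n => ∑ i : Fin n, q.2.2 i *
        Phi n m (θ (Fin.cons i (fun b => I (a.succAbove b)))) q) p (pdy (I a))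
    rw [Finset.sum_congr rfl (fun a _ => e1 a), Finset.sum_add_distrib]
    -- first sum
    have e2 : (∑ a : Fin (m + 1), (-1:ℝ) ^ (a:ℕ) *
          Phi n m (θ (Fin.cons (I a) (fun b => I (a.succAbove b)))) p)
        = ((m:ℝ) + 1) * Phi n m (θ I) p := by
      have h : ∀ a : Fin (m + 1), (-1:ℝ) ^ (a:ℕ) *
          Phi n m (θ (Fin.cons (I a) (fun b => I (a.succAbove b)))) p
          = Phi n m (θ I) p := by
        intro a
        rw [hPhiRot a, ← mul_assoc, ← pow_add, Even.neg_one_pow ⟨(a:ℕ), rfl⟩, one_mul]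
      rw [Finset.sum_congr rfl (fun a _ => h a), Finset.sum_const, Finset.card_univ,
        Fintype.card_fin, nsmul_eq_mul]
      push_cast
      ring
    -- second sum
    have e3 : (∑ a : Fin (m + 1), (-1:ℝ) ^ (a:ℕ) * ∑ i : Fin n, p.2.2 i *
          ∫ s in (0:ℝ)..1, s ^ (m + 1) *
            fderiv ℝ (θ (Fin.cons i (fun b => I (a.succAbove b)))) (As n s p) (pdy (I a)))
        = ∫ s in (0:ℝ)..1, s ^ (m + 1) *
            fderiv ℝ (θ I) (As n s p) ((0:ℝ), (0 : Fin n → ℝ), p.2.2) := by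
      have step1 : ∀ a : Fin (m + 1), (-1:ℝ) ^ (a:ℕ) * ∑ i : Fin n, p.2.2 i *
          ∫ s in (0:ℝ)..1, s ^ (m + 1) *
            fderiv ℝ (θ (Fin.cons i (fun b => I (a.succAbove b)))) (As n s p) (pdy (I a))
          = ∑ i : Fin n, p.2.2 i *
            ∫ s in (0:ℝ)..1, (-1:ℝ) ^ (a:ℕ) * (s ^ (m + 1) *
              fderiv ℝ (θ (Fin.cons i (fun b => I (a.succAbove b)))) (As n s p) (pdy (I a))) := by
        intro a
        rw [Finset.mul_sum]
        apply Finset.sum_congr rfl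
        intro i _
        rw [intervalIntegral.integral_const_mul]
        ring
      rw [Finset.sum_congr rfl (fun a _ => step1 a), Finset.sum_comm]
      have step2 : ∀ i : Fin n, (∑ a : Fin (m + 1), p.2.2 i *
          ∫ s in (0:ℝ)..1, (-1:ℝ) ^ (a:ℕ) * (s ^ (m + 1) *
            fderiv ℝ (θ (Fin.cons i (fun b => I (a.succAbove b)))) (As n s p) (pdy (I a))))
          = p.2.2 i * ∫ s in (0:ℝ)..1, s ^ (m + 1) *
              fderiv ℝ (θ I) (As n s p) (pdy i) := by
        intro i
        rw [← Finset.mul_sum]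
        congr 1
        rw [← intervalIntegral.integral_finset_sum]
        · apply intervalIntegral.integral_congr
          intro s _
          show (∑ a : Fin (m + 1), (-1:ℝ) ^ (a:ℕ) * (s ^ (m + 1) *
              fderiv ℝ (θ (Fin.cons i (fun b => I (a.succAbove b)))) (As n s p) (pdy (I a))))
            = s ^ (m + 1) * fderiv ℝ (θ I) (As n s p) (pdy i)
          rw [hclosed' i (As n s p), Finset.mul_sum]
          apply Finset.sum_congr rfl
          intro a _
          ring
        · intro a _
          exact (continuous_const.mul ((continuous_pow (m+1)).mul
            (cont_deriv_line _ (hθsmooth _) p _))).intervalIntegrable 0 1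
      rw [Finset.sum_congr rfl (fun i _ => step2 i)]
      have step3 : ∀ i : Fin n, p.2.2 i * (∫ s in (0:ℝ)..1, s ^ (m + 1) *
            fderiv ℝ (θ I) (As n s p) (pdy i))
          = ∫ s in (0:ℝ)..1, s ^ (m + 1) *
              (p.2.2 i * fderiv ℝ (θ I) (As n s p) (pdy i)) := by
        intro i
        rw [← intervalIntegral.integral_const_mul]
        apply intervalIntegral.integral_congr; intro s _
        show p.2.2 i * (s ^ (m + 1) * fderiv ℝ (θ I) (As n s p) (pdy i)) = _
        ring
      rw [Finset.sum_congr rfl (fun i _ => step3 i)]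
      rw [← intervalIntegral.integral_finset_sum]
      · apply intervalIntegral.integral_congr
        intro s _
        show (∑ i : Fin n, s ^ (m + 1) * (p.2.2 i * fderiv ℝ (θ I) (As n s p) (pdy i)))
          = s ^ (m + 1) * fderiv ℝ (θ I) (As n s p) ((0:ℝ), (0 : Fin n → ℝ), p.2.2)
        have hlin : fderiv ℝ (θ I) (As n s p) ((0:ℝ), (0 : Fin n → ℝ), p.2.2)
            = ∑ i : Fin n, p.2.2 i * fderiv ℝ (θ I) (As n s p) (pdy i) := by
          rw [← pdy_sum p.2.2, map_sum]
          apply Finset.sum_congr rfl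
          intro i _
          rw [ContinuousLinearMap.map_smul, smul_eq_mul]
        rw [hlin, Finset.mul_sum]
      · intro i _
        apply Continuous.intervalIntegrable
        exact (continuous_pow (m+1)).mul
          (continuous_const.mul (cont_deriv_line _ (hθsmooth I) p _))
    rw [e2, e3]
    have e4 : ((m:ℝ) + 1) * Phi n m (θ I) p
        = ∫ s in (0:ℝ)..1, ((m:ℝ) + 1) * s ^ m * θ I (As n s p) := by
      show ((m:ℝ) + 1) * ∫ s in (0:ℝ)..1, Fm n m (θ I) (s, p) = _
      rw [← intervalIntegral.integral_const_mul]
      apply intervalIntegral.integral_congr; intro s _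
      show ((m:ℝ) + 1) * Fm n m (θ I) (s, p) = _
      unfold Fm
      ring
    have hi1 : IntervalIntegrable (fun s : ℝ => ((m:ℝ) + 1) * s ^ m * θ I (As n s p))
        volume 0 1 := by
      apply Continuous.intervalIntegrable
      exact (continuous_const.mul (continuous_pow m)).mul
        ((hθsmooth I).continuous.comp (cont_As_line p))
    rw [e4, ← intervalIntegral.integral_add hi1 (hInt1 I ((0:ℝ), (0 : Fin n → ℝ), p.2.2))]
    exact ftc m (θ I) (hθsmooth I) p
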